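/- Consider the system z' = z^μ v, v' = 0 with integer μ > 1 and initial data z₀, v₀ ∈ ℂ*. The solution is v(t) ≡ v₀ and z(t) = z₀ (1 − (μ−1) v₀ z₀^{μ−1} t)^{−1/(μ−1)} (branch chosen so z(0) = z₀); in particular z(t) → 0 as t → +∞ if and only if v₀ z₀^{μ−1} ∉ ℝ⁺. -/

import Mathlib

open Filter

/-- A function with zero derivative on an open ord-connected set of reals is constant there. -/
lemma const_of_deriv_zero {I : Set ℝ} (hIopen : IsOpen I) (hIconn : I.OrdConnected)
    (f : ℝ → ℂ) (hf : ∀ t ∈ I, HasDerivAt f 0 t) {x y : ℝ} (hx : x ∈ I) (hy : y ∈ I) :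
    f x = f y := by
  have hconv : Convex ℝ I := convex_iff_ordConnected.mpr hIconn
  refine hconv.is_const_of_fderivWithin_eq_zero
    (fun t ht => ((hf t ht).differentiableAt).differentiableWithinAt) (fun t ht => ?_) hx hy
  rw [fderivWithin_of_isOpen hIopen ht, (hf t ht).hasFDerivAt.fderiv]
  ext
  simp

theorem apparent_singularity_order_gt_one (μ : ℕ) (hμ : 1 < μ)
    (z₀ v₀ : ℂ) (hz₀ : z₀ ≠ 0) (hv₀ : v₀ ≠ 0)
    (I : Set ℝ) (hIopen : IsOpen I) (hIconn : I.OrdConnected) (h0I : (0:ℝ) ∈ I)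
    (z v : ℝ → ℂ) (hz0 : z 0 = z₀) (hv0 : v 0 = v₀)
    (hzne : ∀ t ∈ I, z t ≠ 0)
    (hodez : ∀ t ∈ I, HasDerivAt z ((z t) ^ μ * v t) t)
    (hodev : ∀ t ∈ I, HasDerivAt v 0 t) :
    (∀ t ∈ I, v t = v₀) ∧
    (∀ t ∈ I, (z t) ^ (μ - 1) * (1 - (μ - 1 : ℂ) * v₀ * z₀ ^ (μ - 1) * t)
        = z₀ ^ (μ - 1)) ∧
    (Set.Ici (0:ℝ) ⊆ I →
      (Filter.Tendsto z Filter.atTop (nhds 0) ↔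
        ¬∃ c : ℝ, 0 < c ∧ v₀ * z₀ ^ (μ - 1) = (c : ℂ))) := by
  set m : ℕ := μ - 1 with hm
  have hm1 : 1 ≤ m := by omega
  have hμm : μ = m + 1 := by omega
  have hmc : ((μ:ℂ) - 1) = (m:ℂ) := by rw [hμm]; push_cast; ring
  -- v is constant
  have hvconst : ∀ t ∈ I, v t = v₀ := by
    intro t ht
    rw [← hv0]
    exact const_of_deriv_zero hIopen hIconn v hodev ht h0I
  -- key formula
  have hform : ∀ t ∈ I, (z t) ^ m * (1 - (m:ℂ) * v₀ * z₀ ^ m * t) = z₀ ^ m := by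
    have hF : ∀ t ∈ I,
        HasDerivAt (fun t => (z t) ^ (-(m:ℤ)) + (m:ℂ) * v₀ * t) 0 t := by
      intro t ht
      have hz' : z t ≠ 0 := hzne t ht
      have h1 : HasDerivAt (fun t => (z t) ^ (-(m:ℤ)))
          ((-(m:ℤ) : ℂ) * (z t) ^ (-(m:ℤ) - 1) * ((z t) ^ μ * v t)) t := by
        have := (hasDerivAt_zpow (-(m:ℤ)) (z t) (Or.inl hz')).comp t (hodez t ht)
        simpa [Function.comp_def] using this
      have h2 : HasDerivAt (fun t : ℝ => (m:ℂ) * v₀ * t) ((m:ℂ) * v₀) t := by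
        simpa using (hasDerivAt_id t).ofReal_comp.const_mul ((m:ℂ) * v₀)
      have hsum := h1.add h2
      have hpow : (z t) ^ (-(m:ℤ) - 1) * (z t) ^ μ = 1 := by
        rw [← zpow_natCast (z t) μ, ← zpow_add₀ hz']
        rw [show -(m:ℤ) - 1 + (μ:ℤ) = 0 by omega, zpow_zero]
      have key : (-(m:ℤ) : ℂ) * (z t) ^ (-(m:ℤ) - 1) * ((z t) ^ μ * v t)
          + (m:ℂ) * v₀ = 0 := by
        rw [hvconst t ht]
        push_cast
        linear_combination (-(m:ℂ) * v₀) * hpow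
      rwa [key] at hsum
    intro t ht
    have hz' : z t ≠ 0 := hzne t ht
    have heq : (z t) ^ (-(m:ℤ)) + (m:ℂ) * v₀ * t = z₀ ^ (-(m:ℤ)) := by
      have := const_of_deriv_zero hIopen hIconn _ hF ht h0I
      simpa [hz0] using this
    have hmul := congrArg (fun w => w * ((z t) ^ m * z₀ ^ m)) heq
    simp only [add_mul, mul_assoc] at hmul
    rw [zpow_neg, zpow_natCast, zpow_neg, zpow_natCast] at hmul
    field_simp at hmul
    rw [mul_sub, mul_one]
    linear_combination -hmul
  refine ⟨hvconst, ?_, ?_⟩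
  · intro t ht
    have := hform t ht
    rw [hmc]
    convert this using 3
  · -- the limit statement
    intro hIci
    set a : ℂ := v₀ * z₀ ^ m with ha
    have ha0 : a ≠ 0 := mul_ne_zero hv₀ (pow_ne_zero _ hz₀)
    have hkey : ∀ t ∈ I, (z t) ^ m * (1 - (m:ℂ) * a * t) = z₀ ^ m := by
      intro t ht
      have := hform t ht
      rw [ha]
      convert this using 3
      ring
    -- a is not a positive real
    have hnotpos : ¬∃ c : ℝ, 0 < c ∧ a = (c : ℂ) := by
      rintro ⟨c, hc, hac⟩
      have hmc0 : (0:ℝ) < (m:ℝ) * c := by positivity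
      have ht0 : (1 / ((m:ℝ) * c) : ℝ) ∈ I := hIci (Set.mem_Ici.mpr (by positivity))
      have hk := hkey _ ht0
      rw [hac] at hk
      have hzero : (1 - (m:ℂ) * (c:ℂ) * ((1 / ((m:ℝ) * c) : ℝ) : ℂ)) = 0 := by
        have h : ((m:ℂ) * (c:ℂ)) ≠ 0 :=
          mul_ne_zero (Nat.cast_ne_zero.mpr (by omega)) (Complex.ofReal_ne_zero.mpr hc.ne')
        push_cast
        rw [mul_one_div, div_self h, sub_self]
      rw [hzero, mul_zero] at hk
      exact (pow_ne_zero m hz₀) hk.symm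
    -- z tends to 0
    have htend : Tendsto z atTop (nhds 0) := by
      have hne : ∀ t ∈ Set.Ici (0:ℝ), (1 - (m:ℂ) * a * t) ≠ 0 := by
        intro t ht hzero
        have := hkey t (hIci ht)
        rw [hzero, mul_zero] at this
        exact (pow_ne_zero m hz₀) this.symm
      have hnorm : ∀ t ∈ Set.Ici (0:ℝ),
          ‖z t‖ ^ m = ‖z₀‖ ^ m / ‖1 - (m:ℂ) * a * t‖ := by
        intro t ht
        have := congrArg (fun w => ‖w‖) (hkey t (hIci ht))
        simp only [norm_mul, norm_pow] at this
        rw [eq_div_iff (norm_ne_zero_iff.mpr (hne t ht))]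
        exact this
      have hdenom : Tendsto (fun t : ℝ => ‖1 - (m:ℂ) * a * t‖) atTop atTop := by
        have hlb : ∀ t : ℝ, (m:ℝ) * ‖a‖ * t - 1 ≤ ‖1 - (m:ℂ) * a * t‖ := by
          intro t
          have h1 : ‖(m:ℂ) * a * t‖ - ‖(1:ℂ)‖ ≤ ‖1 - (m:ℂ) * a * t‖ := by
            rw [norm_sub_rev]
            exact norm_sub_norm_le _ _
          simp only [norm_mul, norm_one, Complex.norm_natCast, Complex.norm_real,
            Real.norm_eq_abs] at h1
          have h2 : t ≤ |t| := le_abs_self t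
          have h3 : (m:ℝ) * ‖a‖ * t ≤ (m:ℝ) * ‖a‖ * |t| :=
            mul_le_mul_of_nonneg_left h2 (by positivity)
          linarith
        refine tendsto_atTop_mono hlb ?_
        apply Filter.tendsto_atTop_add_const_right
        apply Tendsto.const_mul_atTop (mul_pos (Nat.cast_pos.mpr (by omega : 0 < m)) (norm_pos_iff.mpr ha0))
        exact tendsto_id
      rw [tendsto_zero_iff_norm_tendsto_zero]
      have hpowlim : Tendsto (fun t => ‖z t‖ ^ m) atTop (nhds 0) := by
        have hdiv : Tendsto (fun t : ℝ => ‖z₀‖ ^ m / ‖1 - (m:ℂ) * a * t‖) atTop (nhds 0) :=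
          Tendsto.div_atTop tendsto_const_nhds hdenom
        refine hdiv.congr' ?_
        filter_upwards [eventually_ge_atTop (0:ℝ)] with t ht
        exact (hnorm t ht).symm
      rw [Metric.tendsto_atTop] at hpowlim ⊢
      intro ε hε
      obtain ⟨N, hN⟩ := hpowlim (ε ^ m) (by positivity)
      refine ⟨N, fun t ht => ?_⟩
      have h1 := hN t ht
      rw [Real.dist_eq, sub_zero, abs_of_nonneg (by positivity)] at h1
      rw [Real.dist_eq, sub_zero, abs_of_nonneg (norm_nonneg _)]
      exact lt_of_pow_lt_pow_left₀ m hε.le h1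
    exact ⟨fun _ => hnotpos, fun _ => htend⟩
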